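/- Let a_i = 2^{−i} · ∏_{j=i+1}^{∞} (1 − 2^{−j}) for each natural number i ≥ 0. Then ∑_{i=0}^{∞} i² · a_i = c₀² + c₀ + c₁, where c₀ = ∑_{i=1}^{∞} 1/(2^i − 1) and c₁ = ∑_{i=1}^{∞} 1/(2^i − 1)². -/

import Mathlib

noncomputable def a (i : ℕ) : ℝ :=
  (2 : ℝ) ^ (-(i : ℤ)) * ∏' j : ℕ, (1 - (2 : ℝ) ^ (-((j : ℤ) + (i : ℤ) + 1)))

noncomputable def c₀ : ℝ := ∑' i : ℕ, 1 / ((2 : ℝ) ^ (i + 1) - 1)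

noncomputable def c₁ : ℝ := ∑' i : ℕ, 1 / ((2 : ℝ) ^ (i + 1) - 1) ^ 2

open Filter Topology Finset

namespace SqA

noncomputable def q : ℝ := 2⁻¹

lemma q_pos : (0:ℝ) < q := by norm_num [q]
lemma q_nonneg : (0:ℝ) ≤ q := q_pos.le
lemma q_lt_one : q < 1 := by norm_num [q]
lemma q_le_one : q ≤ 1 := q_lt_one.le
lemma qpow_nonneg (n : ℕ) : 0 ≤ q ^ n := pow_nonneg q_nonneg n
lemma qpow_le_one (n : ℕ) : q ^ n ≤ 1 := pow_le_one₀ q_nonneg q_le_one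
lemma qpow_lt_one (n : ℕ) : q ^ (n+1) < 1 := pow_lt_one₀ q_nonneg q_lt_one (Nat.succ_ne_zero n)
lemma one_sub_qpow_pos (n : ℕ) : 0 < 1 - q ^ (n+1) := by linarith [qpow_lt_one n]

lemma sum_qpow (n : ℕ) : ∑ j ∈ range n, q ^ (j+1) = 1 - q ^ n := by
  induction n with
  | zero => simp
  | succ n ih =>
    rw [Finset.sum_range_succ, ih]
    have : q ^ (n+1) = q ^ n * q := pow_succ q n
    rw [this]
    norm_num [q]; ring

noncomputable def Qf (i : ℕ) : ℝ := ∏' j : ℕ, (1 - q ^ (j + i + 1))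

lemma mult (i : ℕ) : Multipliable fun j : ℕ => (1 - q ^ (j + i + 1)) := by
  have hpos : ∀ j : ℕ, 0 < 1 - q ^ (j + i + 1) := fun j => one_sub_qpow_pos (j + i)
  refine Real.multipliable_of_summable_log (fun j => hpos j) ?_
  -- Summable fun j => Real.log (1 - q ^ (j+i+1))
  have hb : ∀ j : ℕ, |Real.log (1 - q ^ (j + i + 1))| ≤ 2 * q ^ (j + i + 1) := by
    intro j
    have h1 : q ^ (j + i + 1) ≤ 2⁻¹ := by
      calc q ^ (j + i + 1) ≤ q ^ 1 := pow_le_pow_of_le_one q_nonneg q_le_one (by omega)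
      _ = 2⁻¹ := by norm_num [q]
    have h0 : (0:ℝ) ≤ q ^ (j + i + 1) := qpow_nonneg _
    have hx : 0 < 1 - q ^ (j + i + 1) := hpos j
    have hlog_le : Real.log (1 - q ^ (j + i + 1)) ≤ 0 := by
      apply Real.log_nonpos (by linarith) (by linarith)
    have hlb : 1 - (1 - q ^ (j + i + 1))⁻¹ ≤ Real.log (1 - q ^ (j + i + 1)) :=
      Real.one_sub_inv_le_log_of_pos hx
    rw [abs_of_nonpos hlog_le]
    have h2 : (1 - q ^ (j + i + 1))⁻¹ ≤ 2 := by
      have := inv_anti₀ (show (0:ℝ) < 2⁻¹ by norm_num)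
        (show (2⁻¹:ℝ) ≤ 1 - q ^ (j + i + 1) by linarith)
      simpa using this
    have hid : (1 - q ^ (j + i + 1))⁻¹ - 1 = q ^ (j + i + 1) * (1 - q ^ (j + i + 1))⁻¹ := by
      field_simp
      ring
    have h3 : q ^ (j + i + 1) * (1 - q ^ (j + i + 1))⁻¹ ≤ q ^ (j + i + 1) * 2 :=
      mul_le_mul_of_nonneg_left h2 h0
    linarith
  apply Summable.of_abs
  apply Summable.of_nonneg_of_le (fun j => abs_nonneg _) hb
  apply Summable.mul_left
  have : Summable fun j : ℕ => q ^ j := summable_geometric_of_lt_one q_nonneg q_lt_one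
  exact ((summable_nat_add_iff (i+1)).2 this).congr (fun j => by rw [pow_add, pow_add]; ring_nf)

lemma partial_tendsto (i : ℕ) :
    Tendsto (fun n => ∏ j ∈ range n, (1 - q ^ (j + i + 1))) atTop (𝓝 (Qf i)) :=
  (mult i).hasProd.tendsto_prod_nat

lemma partial_le_one (i n : ℕ) : ∏ j ∈ range n, (1 - q ^ (j + i + 1)) ≤ 1 :=
  Finset.prod_le_one (fun j _ => by linarith [qpow_lt_one (j+i)]) (fun j _ => by linarith [qpow_nonneg (j+i+1)])

lemma weier (x : ℕ → ℝ) (hx0 : ∀ j, 0 ≤ x j) (hx1 : ∀ j, x j ≤ 1) (n : ℕ) :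
    1 - ∑ j ∈ range n, x j ≤ ∏ j ∈ range n, (1 - x j) := by
  induction n with
  | zero => simp
  | succ n ih =>
    rw [Finset.sum_range_succ, Finset.prod_range_succ]
    have hs : 0 ≤ ∑ j ∈ range n, x j := Finset.sum_nonneg (fun j _ => hx0 j)
    have h1 : (1 - ∑ j ∈ range n, x j) * (1 - x n) ≤ (∏ j ∈ range n, (1 - x j)) * (1 - x n) :=
      mul_le_mul_of_nonneg_right ih (by linarith [hx1 n])
    nlinarith [hx0 n]

lemma partial_ge (i n : ℕ) : 1 - q ^ i ≤ ∏ j ∈ range n, (1 - q ^ (j + i + 1)) := by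
  have h := weier (fun j => q ^ (j + i + 1)) (fun j => qpow_nonneg _)
    (fun j => qpow_le_one _) n
  have hs : ∑ j ∈ range n, q ^ (j + i + 1) ≤ q ^ i := by
    have : ∑ j ∈ range n, q ^ (j + i + 1) = q ^ i * ∑ j ∈ range n, q ^ (j+1) := by
      rw [Finset.mul_sum]; apply Finset.sum_congr rfl; intro j _
      rw [← pow_add]; ring_nf
    rw [this, sum_qpow]
    nlinarith [qpow_nonneg i, qpow_nonneg n, qpow_le_one n]
  linarith [h]

lemma Qf_le_one (i : ℕ) : Qf i ≤ 1 :=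
  le_of_tendsto (partial_tendsto i) (Eventually.of_forall (partial_le_one i))

lemma Qf_ge (i : ℕ) : 1 - q ^ i ≤ Qf i :=
  ge_of_tendsto (partial_tendsto i) (Eventually.of_forall (partial_ge i))

lemma Qf_nonneg (i : ℕ) : 0 ≤ Qf i := le_trans (by linarith [qpow_le_one i]) (Qf_ge i)

lemma Qf_succ (i : ℕ) : Qf i = (1 - q ^ (i+1)) * Qf (i+1) := by
  have hshift : Multipliable fun j : ℕ => (1 - q ^ (j + 1 + i + 1)) :=
    (mult (i+1)).congr (fun j => by norm_num [show j + (i+1) + 1 = j + 1 + i + 1 from by omega])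
  have h := tprod_eq_zero_mul' (f := fun j : ℕ => (1 - q ^ (j + i + 1))) hshift
  rw [Qf, h]
  congr 1
  · norm_num
  · rw [Qf]; exact tprod_congr fun j => by norm_num [show j + (i+1) + 1 = j + 1 + i + 1 from by omega]

lemma two_zpow (n : ℕ) : (2:ℝ) ^ (-(n:ℤ)) = q ^ n := by
  rw [q, zpow_neg, zpow_natCast, inv_pow]

lemma two_zpow' (j i : ℕ) : (2:ℝ) ^ (-((j:ℤ) + (i:ℤ) + 1)) = q ^ (j + i + 1) := by
  rw [show -((j:ℤ) + (i:ℤ) + 1) = -(((j+i+1 : ℕ) : ℤ)) by push_cast; ring, two_zpow]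

lemma a_eq (i : ℕ) : a i = q ^ i * Qf i := by
  rw [a, Qf, two_zpow]
  congr 1
  exact tprod_congr fun j => by rw [two_zpow']

lemma a_nonneg (k : ℕ) : 0 ≤ a k := by
  rw [a_eq]; exact mul_nonneg (qpow_nonneg k) (Qf_nonneg k)

lemma a_le (k : ℕ) : a k ≤ q ^ k := by
  rw [a_eq]
  calc q ^ k * Qf k ≤ q ^ k * 1 := mul_le_mul_of_nonneg_left (Qf_le_one k) (qpow_nonneg k)
  _ = q ^ k := mul_one _

lemma a_succ (k : ℕ) : (1 - q ^ (k+1)) * a (k+1) = q * a k := by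
  rw [a_eq, a_eq, Qf_succ k]
  ring


noncomputable def F (t k : ℕ) : ℝ := (q ^ t) ^ k * a k

lemma F_nonneg (t k : ℕ) : 0 ≤ F t k :=
  mul_nonneg (pow_nonneg (qpow_nonneg t) k) (a_nonneg k)

lemma F_le (t k : ℕ) : F t k ≤ q ^ k := by
  have h1 : (q ^ t) ^ k ≤ 1 := pow_le_one₀ (qpow_nonneg t) (qpow_le_one t)
  calc F t k ≤ 1 * a k := mul_le_mul_of_nonneg_right h1 (a_nonneg k)
  _ = a k := one_mul _
  _ ≤ q ^ k := a_le k

lemma F_zero (t : ℕ) : F t 0 = a 0 := by simp [F]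

lemma key (t k : ℕ) : F (t+1) (k+1) = F t (k+1) - q ^ (t+1) * F t k := by
  have h : q^(k+1) * a (k+1) = a (k+1) - q * a k := by linear_combination - a_succ k
  have h2 : (q ^ (t+1)) ^ (k+1) = (q^t)^(k+1) * q^(k+1) := by rw [pow_succ q t, mul_pow]
  calc F (t+1) (k+1) = (q^t)^(k+1) * (q^(k+1) * a (k+1)) := by rw [F, h2]; ring
  _ = (q^t)^(k+1) * (a (k+1) - q * a k) := by rw [h]
  _ = F t (k+1) - q ^ (t+1) * F t k := by
      simp only [F]
      rw [pow_succ q t]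
      generalize (q:ℝ)^t = x
      ring

lemma sum_geom : Summable fun k : ℕ => q ^ k := summable_geometric_of_lt_one q_nonneg q_lt_one

lemma sum_kq : Summable fun k : ℕ => (k:ℝ) * q ^ k := by
  have := summable_pow_mul_geometric_of_norm_lt_one 1 (r := q)
    (by rw [Real.norm_eq_abs, abs_of_nonneg q_nonneg]; exact q_lt_one)
  simpa using this

lemma sum_k2q : Summable fun k : ℕ => (k:ℝ)^2 * q ^ k :=
  summable_pow_mul_geometric_of_norm_lt_one 2 (r := q)
    (by rw [Real.norm_eq_abs, abs_of_nonneg q_nonneg]; exact q_lt_one)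

lemma sumF (t : ℕ) : Summable (F t) :=
  Summable.of_nonneg_of_le (F_nonneg t) (F_le t) sum_geom

lemma sumG (t : ℕ) : Summable fun k : ℕ => (k:ℝ) * F t k :=
  Summable.of_nonneg_of_le (fun k => mul_nonneg (Nat.cast_nonneg k) (F_nonneg t k))
    (fun k => mul_le_mul_of_nonneg_left (F_le t k) (Nat.cast_nonneg k)) sum_kq

lemma sumH (t : ℕ) : Summable fun k : ℕ => (k:ℝ)^2 * F t k :=
  Summable.of_nonneg_of_le (fun k => mul_nonneg (sq_nonneg _) (F_nonneg t k))
    (fun k => mul_le_mul_of_nonneg_left (F_le t k) (sq_nonneg _)) sum_k2q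

lemma tsum_tail {f : ℕ → ℝ} (hf : Summable f) : ∑' k, f (k+1) = (∑' k, f k) - f 0 := by
  rw [Summable.tsum_eq_zero_add hf]; ring

noncomputable def A (t : ℕ) : ℝ := ∑' k, F t k
noncomputable def B (t : ℕ) : ℝ := ∑' k : ℕ, (k:ℝ) * F t k
noncomputable def C (t : ℕ) : ℝ := ∑' k : ℕ, (k:ℝ)^2 * F t k

lemma A_rec (t : ℕ) : A (t+1) = (1 - q^(t+1)) * A t := by
  have e1 : A (t+1) = a 0 + ∑' k, F (t+1) (k+1) := by
    rw [A, Summable.tsum_eq_zero_add (sumF (t+1)), F_zero]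
  have e2 : ∀ k : ℕ, F (t+1) (k+1) = F t (k+1) - q^(t+1) * F t k := key t
  rw [e1, tsum_congr e2,
    Summable.tsum_sub ((summable_nat_add_iff 1).2 (sumF t)) ((sumF t).mul_left _),
    tsum_mul_left, tsum_tail (sumF t), F_zero]
  show a 0 + (A t - a 0 - q^(t+1) * A t) = _
  ring

lemma B_rec (t : ℕ) : B (t+1) = (1 - q^(t+1)) * B t - q^(t+1) * A t := by
  have hsG : Summable fun k : ℕ => ((k+1 : ℕ):ℝ) * F t (k+1) :=
    (summable_nat_add_iff (f := fun k => (k:ℝ) * F t k) 1).2 (sumG t)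
  have e1 : B (t+1) = ∑' k, ((k+1 : ℕ):ℝ) * F (t+1) (k+1) := by
    rw [B, Summable.tsum_eq_zero_add (sumG (t+1))]; simp
  have e2 : ∀ k : ℕ, ((k+1 : ℕ):ℝ) * F (t+1) (k+1)
      = ((k+1 : ℕ):ℝ) * F t (k+1) - q^(t+1) * ((k:ℝ) * F t k + F t k) := by
    intro k; rw [key t k]; push_cast; ring
  rw [e1, tsum_congr e2,
    Summable.tsum_sub hsG (((sumG t).add (sumF t)).mul_left _),
    tsum_mul_left, Summable.tsum_add (sumG t) (sumF t),
    tsum_tail (sumG t)]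
  simp only [Nat.cast_zero, zero_mul, sub_zero]
  show (∑' k : ℕ, (k:ℝ) * F t k) - q^(t+1) * ((∑' k : ℕ, (k:ℝ) * F t k) + ∑' k, F t k)
      = (1 - q^(t+1)) * B t - q^(t+1) * A t
  rw [← B, ← A]
  ring


lemma C_rec (t : ℕ) : C (t+1) = (1 - q^(t+1)) * C t - q^(t+1) * (2 * B t + A t) := by
  have hsH : Summable fun k : ℕ => ((k+1 : ℕ):ℝ)^2 * F t (k+1) :=
    (summable_nat_add_iff (f := fun k => (k:ℝ)^2 * F t k) 1).2 (sumH t)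
  have e1 : C (t+1) = ∑' k, ((k+1 : ℕ):ℝ)^2 * F (t+1) (k+1) := by
    rw [C, Summable.tsum_eq_zero_add (sumH (t+1))]; simp
  have e2 : ∀ k : ℕ, ((k+1 : ℕ):ℝ)^2 * F (t+1) (k+1)
      = ((k+1 : ℕ):ℝ)^2 * F t (k+1)
        - q^(t+1) * ((k:ℝ)^2 * F t k + (2 * ((k:ℝ) * F t k) + F t k)) := by
    intro k; rw [key t k]; push_cast; ring
  rw [e1, tsum_congr e2,
    Summable.tsum_sub hsH (((sumH t).add (((sumG t).mul_left 2).add (sumF t))).mul_left _),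
    tsum_mul_left, Summable.tsum_add (sumH t) (((sumG t).mul_left 2).add (sumF t)),
    Summable.tsum_add ((sumG t).mul_left 2) (sumF t), tsum_mul_left,
    tsum_tail (sumH t)]
  simp only [Nat.cast_zero]
  show (∑' k : ℕ, (k:ℝ)^2 * F t k) - (0:ℝ)^2 * F t 0
      - q^(t+1) * ((∑' k : ℕ, (k:ℝ)^2 * F t k)
        + (2 * (∑' k : ℕ, (k:ℝ) * F t k) + ∑' k, F t k)) = _
  rw [← C, ← B, ← A]
  ring

/-! ### The finite products P -/

noncomputable def P (t : ℕ) : ℝ := ∏ j ∈ range t, (1 - q^(j+1))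

lemma P_zero : P 0 = 1 := by simp [P]

lemma P_succ (t : ℕ) : P (t+1) = P t * (1 - q^(t+1)) := Finset.prod_range_succ _ t

lemma P_pos (t : ℕ) : 0 < P t := Finset.prod_pos fun j _ => one_sub_qpow_pos j

lemma Qf0_eq (t : ℕ) : Qf 0 = P t * Qf t := by
  induction t with
  | zero => simp [P_zero]
  | succ t ih => rw [ih, Qf_succ t, P_succ]; ring

lemma Qf_pos (i : ℕ) : 0 < Qf i := by
  cases i with
  | zero =>
    rw [Qf_succ 0]
    have h1 : (0:ℝ) < 1 - q ^ 1 := one_sub_qpow_pos 0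
    have h2 : 1 - q ^ 1 ≤ Qf 1 := Qf_ge 1
    exact mul_pos h1 (lt_of_lt_of_le h1 h2)
  | succ n => exact lt_of_lt_of_le (one_sub_qpow_pos n) (Qf_ge (n+1))

open Filter Topology in
lemma hqpow_lim : Tendsto (fun t : ℕ => q ^ t) atTop (𝓝 0) :=
  tendsto_pow_atTop_nhds_zero_of_lt_one q_nonneg q_lt_one

open Filter Topology in
lemma hQlim : Tendsto Qf atTop (𝓝 1) := by
  have h1 : Tendsto (fun t : ℕ => 1 - q ^ t) atTop (𝓝 1) := by
    have h0 : Tendsto (fun _ : ℕ => (1:ℝ)) atTop (𝓝 1) := tendsto_const_nhds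
    simpa using h0.sub hqpow_lim
  exact tendsto_of_tendsto_of_tendsto_of_le_of_le h1 tendsto_const_nhds
    (fun t => Qf_ge t) (fun t => Qf_le_one t)

open Filter Topology in
lemma hPlim : Tendsto P atTop (𝓝 (Qf 0)) := by
  have he : ∀ t, P t = Qf 0 / Qf t := by
    intro t
    rw [Qf0_eq t]
    field_simp [(Qf_pos t).ne']
  have h1 : Tendsto (fun t => Qf 0 / Qf t) atTop (𝓝 (Qf 0 / 1)) :=
    tendsto_const_nhds.div hQlim one_ne_zero
  rw [div_one] at h1
  exact h1.congr (fun t => (he t).symm)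

/-! ### Limits of A, B, C -/

lemma F_succ_le (t k : ℕ) : F t (k+1) ≤ q^t * q^(k+1) := by
  have h1 : (q ^ t) ^ (k+1) ≤ q ^ t :=
    pow_le_of_le_one (qpow_nonneg t) (qpow_le_one t) (Nat.succ_ne_zero k)
  exact mul_le_mul h1 (a_le (k+1)) (a_nonneg (k+1)) (qpow_nonneg t)

open Filter Topology in
lemma hAlim : Tendsto A atTop (𝓝 (a 0)) := by
  have hR : ∀ t, A t = a 0 + ∑' k, F t (k+1) := by
    intro t; rw [A, Summable.tsum_eq_zero_add (sumF t), F_zero]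
  have hub : ∀ t, ∑' k, F t (k+1) ≤ q^t * 1 := by
    intro t
    have hs1 : Summable fun k => F t (k+1) := (summable_nat_add_iff 1).2 (sumF t)
    have hs2 : Summable fun k : ℕ => q^t * q^(k+1) :=
      (((summable_nat_add_iff (f := fun k : ℕ => q ^ k) 1).2 sum_geom)).mul_left _
    calc ∑' k, F t (k+1) ≤ ∑' k : ℕ, q^t * q^(k+1) := Summable.tsum_le_tsum (F_succ_le t) hs1 hs2
    _ = q^t * ∑' k : ℕ, q^(k+1) := tsum_mul_left
    _ ≤ q^t * 1 := by
        have h3 : ∑' k : ℕ, q^(k+1) ≤ 1 := by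
          have h4 : ∑' k : ℕ, q^(k+1) = (∑' k : ℕ, q^k) - q^0 :=
            tsum_tail sum_geom
          rw [h4, tsum_geometric_of_lt_one q_nonneg q_lt_one]
          norm_num [q]
        exact mul_le_mul_of_nonneg_left h3 (qpow_nonneg t)
  have hlb : ∀ t, 0 ≤ ∑' k, F t (k+1) :=
    fun t => tsum_nonneg (fun k => F_nonneg t (k+1))
  have hRlim : Tendsto (fun t => ∑' k, F t (k+1)) atTop (𝓝 0) := by
    apply squeeze_zero hlb (fun t => (hub t).trans_eq (mul_one _))
    exact hqpow_lim
  have h0 : Tendsto (fun _ : ℕ => a 0) atTop (𝓝 (a 0)) := tendsto_const_nhds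
  have := h0.add hRlim
  rw [add_zero] at this
  exact this.congr (fun t => (hR t).symm)

noncomputable def KB : ℝ := ∑' k : ℕ, ((k+1 : ℕ):ℝ) * q^(k+1)
noncomputable def KC : ℝ := ∑' k : ℕ, ((k+1 : ℕ):ℝ)^2 * q^(k+1)

lemma sum_kq1 : Summable fun k : ℕ => ((k+1 : ℕ):ℝ) * q^(k+1) :=
  (summable_nat_add_iff (f := fun k : ℕ => (k:ℝ) * q ^ k) 1).2 sum_kq

lemma sum_k2q1 : Summable fun k : ℕ => ((k+1 : ℕ):ℝ)^2 * q^(k+1) :=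
  (summable_nat_add_iff (f := fun k : ℕ => (k:ℝ)^2 * q ^ k) 1).2 sum_k2q

open Filter Topology in
lemma hBlim : Tendsto B atTop (𝓝 0) := by
  have hR : ∀ t, B t = ∑' k, ((k+1 : ℕ):ℝ) * F t (k+1) := by
    intro t; rw [B, Summable.tsum_eq_zero_add (sumG t)]; simp
  have hub : ∀ t, B t ≤ q^t * KB := by
    intro t
    rw [hR t]
    have hs1 : Summable fun k => ((k+1 : ℕ):ℝ) * F t (k+1) :=
      (summable_nat_add_iff (f := fun k => (k:ℝ) * F t k) 1).2 (sumG t)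
    calc ∑' k, ((k+1 : ℕ):ℝ) * F t (k+1)
        ≤ ∑' k : ℕ, q^t * (((k+1 : ℕ):ℝ) * q^(k+1)) := by
          apply Summable.tsum_le_tsum _ hs1 (sum_kq1.mul_left _)
          intro k
          have := mul_le_mul_of_nonneg_left (F_succ_le t k) (Nat.cast_nonneg (k+1) : (0:ℝ) ≤ ((k+1:ℕ):ℝ))
          calc ((k+1 : ℕ):ℝ) * F t (k+1) ≤ ((k+1 : ℕ):ℝ) * (q^t * q^(k+1)) := this
          _ = q^t * (((k+1 : ℕ):ℝ) * q^(k+1)) := by ring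
    _ = q^t * KB := tsum_mul_left
  have hlb : ∀ t, 0 ≤ B t := by
    intro t; rw [hR t]
    exact tsum_nonneg fun k => mul_nonneg (Nat.cast_nonneg _) (F_nonneg t (k+1))
  apply squeeze_zero hlb hub
  simpa using hqpow_lim.mul_const KB

open Filter Topology in
lemma hClim : Tendsto C atTop (𝓝 0) := by
  have hR : ∀ t, C t = ∑' k, ((k+1 : ℕ):ℝ)^2 * F t (k+1) := by
    intro t; rw [C, Summable.tsum_eq_zero_add (sumH t)]; simp
  have hub : ∀ t, C t ≤ q^t * KC := by
    intro t
    rw [hR t]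
    have hs1 : Summable fun k => ((k+1 : ℕ):ℝ)^2 * F t (k+1) :=
      (summable_nat_add_iff (f := fun k => (k:ℝ)^2 * F t k) 1).2 (sumH t)
    calc ∑' k, ((k+1 : ℕ):ℝ)^2 * F t (k+1)
        ≤ ∑' k : ℕ, q^t * (((k+1 : ℕ):ℝ)^2 * q^(k+1)) := by
          apply Summable.tsum_le_tsum _ hs1 (sum_k2q1.mul_left _)
          intro k
          have h0 : (0:ℝ) ≤ ((k+1:ℕ):ℝ)^2 := sq_nonneg _
          have := mul_le_mul_of_nonneg_left (F_succ_le t k) h0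
          calc ((k+1 : ℕ):ℝ)^2 * F t (k+1) ≤ ((k+1 : ℕ):ℝ)^2 * (q^t * q^(k+1)) := this
          _ = q^t * (((k+1 : ℕ):ℝ)^2 * q^(k+1)) := by ring
    _ = q^t * KC := tsum_mul_left
  have hlb : ∀ t, 0 ≤ C t := by
    intro t; rw [hR t]
    exact tsum_nonneg fun k => mul_nonneg (sq_nonneg _) (F_nonneg t (k+1))
  apply squeeze_zero hlb hub
  simpa using hqpow_lim.mul_const KC


/-! ### Assembly -/

open Filter Topology

lemma LA (t : ℕ) : A t = A 0 * P t := by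
  induction t with
  | zero => rw [P_zero, mul_one]
  | succ t ih => rw [A_rec, ih, P_succ]; ring

lemma A0 : A 0 = 1 := by
  have h1 : Tendsto (fun t => A 0 * P t) atTop (𝓝 (A 0 * Qf 0)) :=
    tendsto_const_nhds.mul hPlim
  have h2 : Tendsto (fun t => A 0 * P t) atTop (𝓝 (a 0)) :=
    hAlim.congr (fun t => LA t)
  have h3 : a 0 = A 0 * Qf 0 := tendsto_nhds_unique h2 h1
  have h4 : a 0 = Qf 0 := by rw [a_eq 0, pow_zero, one_mul]
  have h5 : A 0 * Qf 0 = 1 * Qf 0 := by rw [← h3, h4, one_mul]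
  exact mul_right_cancel₀ (Qf_pos 0).ne' h5

lemma A_eq_P (t : ℕ) : A t = P t := by rw [LA t, A0, one_mul]

noncomputable def d (i : ℕ) : ℝ := 1 / ((2:ℝ)^(i+1) - 1)

lemma two_pow_pos (i : ℕ) : (0:ℝ) < 2^i := by positivity

lemma two_pow_sub_one_pos (i : ℕ) : (0:ℝ) < 2^(i+1) - 1 := by
  have h : (2:ℝ)^i ≥ 1 := one_le_pow₀ (by norm_num)
  have h2 : (2:ℝ)^(i+1) = 2 * 2^i := by rw [pow_succ]; ring
  nlinarith

lemma d_nonneg (i : ℕ) : 0 ≤ d i := le_of_lt (by rw [d]; exact div_pos one_pos (two_pow_sub_one_pos i))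

lemma d_le (i : ℕ) : d i ≤ q ^ i := by
  rw [d, q, inv_pow, ← one_div]
  apply one_div_le_one_div_of_le (two_pow_pos i)
  have h2 : (2:ℝ)^(i+1) = 2 * 2^i := by rw [pow_succ]; ring
  have h3 : (1:ℝ) ≤ 2^i := one_le_pow₀ (by norm_num)
  linarith

lemma d_le_one (i : ℕ) : d i ≤ 1 := (d_le i).trans (qpow_le_one i)

lemma sum_d : Summable d := Summable.of_nonneg_of_le d_nonneg d_le sum_geom

lemma sum_d2 : Summable fun i => d i ^ 2 :=
  Summable.of_nonneg_of_le (fun i => sq_nonneg _)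
    (fun i => by
      calc d i ^ 2 = d i * d i := sq (d i) ▸ rfl
      _ ≤ q ^ i * 1 := mul_le_mul (d_le i) (d_le_one i) (d_nonneg i) (qpow_nonneg i)
      _ = q ^ i := mul_one _) sum_geom

lemma c0_eq : c₀ = ∑' i, d i := rfl

lemma c1_eq : c₁ = ∑' i, d i ^ 2 := tsum_congr fun i => by rw [d, div_pow, one_pow]

lemma key_d (t : ℕ) : q^(t+1) * P t = P t * (1 - q^(t+1)) * d t := by
  rw [d, q, inv_pow]
  have h1 : ((2:ℝ)^(t+1)) ≠ 0 := (two_pow_pos (t+1)).ne'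
  have h2 : ((2:ℝ)^(t+1) - 1) ≠ 0 := (two_pow_sub_one_pos t).ne'
  field_simp

noncomputable def W (t : ℕ) : ℝ := ∑ i ∈ range t, d i

lemma hW : Tendsto W atTop (𝓝 c₀) := by
  rw [c0_eq]
  exact sum_d.hasSum.tendsto_sum_nat

noncomputable def ρ (t : ℕ) : ℝ := c₀ - W t

lemma ρ_zero : ρ 0 = c₀ := by simp [ρ, W]

lemma ρ_succ (t : ℕ) : ρ (t+1) = ρ t - d t := by
  simp only [ρ, W, Finset.sum_range_succ]; ring

lemma hρ : Tendsto ρ atTop (𝓝 0) := by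
  have h0 : Tendsto (fun _ : ℕ => c₀) atTop (𝓝 c₀) := tendsto_const_nhds
  have := h0.sub hW
  rw [sub_self] at this; exact this

lemma LB (t : ℕ) : B t = P t * (B 0 - W t) := by
  induction t with
  | zero => simp [P_zero, W]
  | succ t ih =>
    rw [B_rec, ih, A_eq_P, P_succ, show W (t+1) = W t + d t from Finset.sum_range_succ d t]
    linear_combination (-1 : ℝ) * key_d t

lemma B0 : B 0 = c₀ := by
  have h1 : Tendsto (fun t => P t * (B 0 - W t)) atTop (𝓝 (Qf 0 * (B 0 - c₀))) :=
    hPlim.mul (tendsto_const_nhds.sub hW)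
  have h2 : Tendsto (fun t => P t * (B 0 - W t)) atTop (𝓝 0) :=
    hBlim.congr (fun t => LB t)
  have h3 : Qf 0 * (B 0 - c₀) = 0 := (tendsto_nhds_unique h1 h2)
  rcases mul_eq_zero.1 h3 with h | h
  · exact absurd h (Qf_pos 0).ne'
  · linarith [sub_eq_zero.1 h]

lemma B_eq (t : ℕ) : B t = P t * ρ t := by rw [LB t, B0, ρ]

noncomputable def V (t : ℕ) : ℝ := ∑ i ∈ range t, d i * (2 * ρ i + 1)

lemma LC (t : ℕ) : C t = P t * (C 0 - V t) := by
  induction t with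
  | zero => simp [P_zero, V]
  | succ t ih =>
    rw [C_rec, ih, B_eq, A_eq_P, P_succ,
      show V (t+1) = V t + d t * (2 * ρ t + 1) from Finset.sum_range_succ _ t]
    linear_combination (-(2 * ρ t + 1)) * key_d t

lemma V_eq (t : ℕ) : V t = ρ 0 ^ 2 - ρ t ^ 2 + ∑ i ∈ range t, (d i ^ 2 + d i) := by
  have h1 : ∀ i, d i * (2 * ρ i + 1) = (ρ i ^ 2 - ρ (i+1) ^ 2) + (d i ^ 2 + d i) := by
    intro i; rw [ρ_succ]; ring
  rw [V, Finset.sum_congr rfl (fun i _ => h1 i), Finset.sum_add_distrib,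
    Finset.sum_range_sub' (fun i => ρ i ^ 2)]

lemma hV : Tendsto V atTop (𝓝 (c₀ ^ 2 - 0 + (c₁ + c₀))) := by
  have hρ2 : Tendsto (fun t => ρ t ^ 2) atTop (𝓝 0) := by
    have h := hρ.mul hρ
    rw [mul_zero] at h
    exact h.congr (fun t => (pow_two (ρ t)).symm)
  have hSS : Tendsto (fun t => ∑ i ∈ range t, (d i ^ 2 + d i)) atTop (𝓝 (c₁ + c₀)) := by
    have hs : HasSum (fun i => d i ^ 2 + d i) (c₁ + c₀) := by
      rw [c1_eq, c0_eq]
      exact sum_d2.hasSum.add sum_d.hasSum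
    exact hs.tendsto_sum_nat
  have h1 : Tendsto (fun t => ρ 0 ^ 2 - ρ t ^ 2 + ∑ i ∈ range t, (d i ^ 2 + d i))
      atTop (𝓝 (c₀ ^ 2 - 0 + (c₁ + c₀))) := by
    have h0 : Tendsto (fun _ : ℕ => ρ 0 ^ 2) atTop (𝓝 (c₀ ^ 2)) := by
      rw [ρ_zero]; exact tendsto_const_nhds
    exact (h0.sub hρ2).add hSS
  exact h1.congr (fun t => (V_eq t).symm)

lemma C0 : C 0 = c₀ ^ 2 + c₀ + c₁ := by
  have h1 : ∀ t, V t = C 0 - C t * (P t)⁻¹ := by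
    intro t
    have := LC t
    field_simp [(P_pos t).ne']
    linarith [LC t]
  have h2 : Tendsto (fun t => C 0 - C t * (P t)⁻¹) atTop (𝓝 (C 0 - 0 * (Qf 0)⁻¹)) :=
    tendsto_const_nhds.sub (hClim.mul (hPlim.inv₀ (Qf_pos 0).ne'))
  have h3 : Tendsto V atTop (𝓝 (C 0 - 0 * (Qf 0)⁻¹)) := h2.congr (fun t => (h1 t).symm)
  have h4 := tendsto_nhds_unique h3 hV
  rw [zero_mul, sub_zero] at h4
  linarith

end SqA

/-- `∑_{i=0}^{∞} i² · a_i = c₀² + c₀ + c₁`. -/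
theorem tsum_sq_mul_a : ∑' i : ℕ, (i : ℝ) ^ 2 * a i = c₀ ^ 2 + c₀ + c₁ := by
  have h : ∑' i : ℕ, (i : ℝ) ^ 2 * a i = SqA.C 0 := by
    rw [SqA.C]
    exact tsum_congr fun k => by simp [SqA.F]
  rw [h, SqA.C0]
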